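/- Let λ ∈ ℂ with |λ| = 1 be a Cremer number (limsup_{m→∞}(1/m)log(1/ω(m)) = +∞, ω(m) = min_{2≤k≤m}|λ^k − λ|). Then there exists a sequence (a_n)_{n≥1} with a₁ = 1 and a_n ∈ {0,1} for n ≥ 2 such that, defining recursively φ₀ = 0, φ₁ = a₁/(λ−1), φ_n = (λ^n − 1)^{-1}(a_n + Σ_{j=1}^{n−1} φ_j φ_{n−j}) for n ≥ 2, one has |a_n + Σ_{j=1}^{n−1} φ_j φ_{n−j}| ≥ 1/2 for all n ≥ 2, and consequently limsup_{n→∞} (1/n) log|φ_n| = +∞, so the formal power series φ(z) = Σ φ_n z^n has radius of convergence zero. -/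

import Mathlib

/-- `ω(m) = min_{2 ≤ k ≤ m} |λ^k - λ|`. -/
noncomputable def brjunoOmega (l : ℂ) (m : ℕ) : ℝ :=
  sInf ((fun k : ℕ => ‖l ^ k - l‖) '' Set.Icc 2 m)

noncomputable def phiS (l : ℂ) : ℕ → ℂ
  | 0 => 0
  | 1 => 1 / (l - 1)
  | (n + 2) =>
      let S : ℂ := ∑ j ∈ (Finset.Icc 1 (n+1)).attach,
          have h1 : j.1 < n + 2 := by have := Finset.mem_Icc.mp j.2; omega
          have h2 : n + 2 - j.1 < n + 2 := by have := Finset.mem_Icc.mp j.2; omega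
          phiS l j.1 * phiS l (n + 2 - j.1)
      (l ^ (n + 2) - 1)⁻¹ * ((if (1:ℝ)/2 ≤ ‖S‖ then 0 else 1) + S)
decreasing_by
  · exact h1
  · exact h2

noncomputable def aS (l : ℂ) (n : ℕ) : ℂ :=
  if n = 1 then 1
  else if (1:ℝ)/2 ≤ ‖∑ j ∈ Finset.Icc 1 (n-1), phiS l j * phiS l (n - j)‖
    then 0 else 1

lemma phiS_rec (l : ℂ) (n : ℕ) (hn : 2 ≤ n) :
    phiS l n = (l ^ n - 1)⁻¹ * (aS l n + ∑ j ∈ Finset.Icc 1 (n-1), phiS l j * phiS l (n - j)) := by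
  obtain ⟨m, rfl⟩ : ∃ m, n = m + 2 := ⟨n - 2, by omega⟩
  rw [phiS]
  simp only [Finset.sum_attach (Finset.Icc 1 (m+1)) (fun j => phiS l j * phiS l (m + 2 - j)),
    aS, if_neg (show ¬ m + 2 = 1 by omega), show m + 2 - 1 = m + 1 from rfl]

lemma aS_key (l : ℂ) (n : ℕ) (hn : 2 ≤ n) :
    (1/2 : ℝ) ≤ ‖aS l n + ∑ j ∈ Finset.Icc 1 (n-1), phiS l j * phiS l (n - j)‖ := by
  set S := ∑ j ∈ Finset.Icc 1 (n-1), phiS l j * phiS l (n - j) with hS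
  rw [aS, if_neg (show ¬ n = 1 by omega)]
  split_ifs with h
  · simpa using h
  · push_neg at h
    have h1 := norm_add_le (1 + S) (-S)
    rw [add_neg_cancel_right, norm_neg, norm_one] at h1
    linarith

lemma omega_attained (l : ℂ) (m : ℕ) (hm : 2 ≤ m) :
    ∃ k, 2 ≤ k ∧ k ≤ m ∧ brjunoOmega l m = ‖l ^ k - l‖ := by
  have hfin : ((fun k : ℕ => ‖l ^ k - l‖) '' Set.Icc 2 m).Finite :=
    (Set.finite_Icc 2 m).image _
  have hne : ((fun k : ℕ => ‖l ^ k - l‖) '' Set.Icc 2 m).Nonempty :=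
    ⟨_, ⟨2, Set.mem_Icc.mpr ⟨le_refl 2, hm⟩, rfl⟩⟩
  obtain ⟨k, hk, hkeq⟩ := hne.csInf_mem hfin
  exact ⟨k, (Set.mem_Icc.mp hk).1, (Set.mem_Icc.mp hk).2, hkeq.symm⟩

/-- for a Cremer number `λ` there are coefficients `a_n ∈ {0,1}` (with
`a₁ = 1`) so that the recursively defined sequence `φ₀ = 0`, `φ₁ = a₁/(λ−1)`,
`φ_n = (λ^n − 1)⁻¹(a_n + Σ_{j=1}^{n−1} φ_j φ_{n−j})` satisfies
`|a_n + Σ_{j=1}^{n−1} φ_j φ_{n−j}| ≥ 1/2` for all `n ≥ 2`, hence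
`limsup (1/n) log|φ_n| = +∞` and `Σ φ_n z^n` has radius of convergence zero. -/
theorem cremer_construction_divergent_series
    (l : ℂ) (habs : ‖l‖ = 1)
    (hC : Filter.limsup
        (fun m : ℕ => (((1 / m : ℝ) * Real.log (1 / brjunoOmega l m) : ℝ) : EReal))
        Filter.atTop = ⊤) :
    ∃ a : ℕ → ℂ, a 1 = 1 ∧ (∀ n : ℕ, 2 ≤ n → a n = 0 ∨ a n = 1) ∧
      ∃ φ : ℕ → ℂ, φ 0 = 0 ∧ φ 1 = a 1 / (l - 1) ∧
        (∀ n : ℕ, 2 ≤ n →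
          φ n = (l ^ n - 1)⁻¹ * (a n + ∑ j ∈ Finset.Icc 1 (n - 1), φ j * φ (n - j))) ∧
        (∀ n : ℕ, 2 ≤ n →
          (1 / 2 : ℝ) ≤ ‖a n + ∑ j ∈ Finset.Icc 1 (n - 1), φ j * φ (n - j)‖) ∧
        Filter.limsup
            (fun n : ℕ => (((1 / n : ℝ) * Real.log (‖φ n‖) : ℝ) : EReal))
            Filter.atTop = ⊤ ∧
        ∀ z : ℂ, z ≠ 0 → ¬ Summable (fun n : ℕ => φ n * z ^ n) := by
  have hl0 : l ≠ 0 := by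
    intro h; rw [h] at habs; simp at habs
  -- `l` is not a root of unity
  have hpow : ∀ j : ℕ, 1 ≤ j → l ^ j ≠ 1 := by
    intro j hj hne
    have hzero : ∀ m : ℕ, j + 1 ≤ m → brjunoOmega l m = 0 := by
      intro m hm
      have hmem : (0:ℝ) ∈ ((fun k : ℕ => ‖l ^ k - l‖) '' Set.Icc 2 m) := by
        refine ⟨j + 1, Set.mem_Icc.mpr ⟨by omega, hm⟩, ?_⟩
        show ‖l ^ (j + 1) - l‖ = 0
        rw [pow_succ, hne, one_mul, sub_self, norm_zero]
      refine le_antisymm (csInf_le ⟨0, fun x ⟨k', _, hk'⟩ => hk' ▸ norm_nonneg _⟩ hmem) ?_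
      exact le_csInf ⟨0, hmem⟩ (fun x ⟨k', _, hk'⟩ => hk' ▸ norm_nonneg _)
    have heq : Filter.limsup
        (fun m : ℕ => (((1 / m : ℝ) * Real.log (1 / brjunoOmega l m) : ℝ) : EReal))
        Filter.atTop = ((0:ℝ) : EReal) := by
      have hev : ∀ᶠ m : ℕ in Filter.atTop,
          (((1 / m : ℝ) * Real.log (1 / brjunoOmega l m) : ℝ) : EReal) = ((0:ℝ) : EReal) := by
        refine Filter.eventually_atTop.mpr ⟨j + 1, fun m hm => ?_⟩
        rw [hzero m hm]; norm_num
      rw [Filter.limsup_congr hev, Filter.limsup_const]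
    rw [hC] at heq
    exact (EReal.coe_lt_top 0).ne' heq
  have hlk : ∀ k : ℕ, 2 ≤ k → l ^ k ≠ l := by
    intro k hk h
    have h2 : l ^ (k - 1) * l = 1 * l := by
      rw [one_mul, ← pow_succ, show k - 1 + 1 = k by omega, h]
    exact hpow (k - 1) (by omega) (mul_right_cancel₀ hl0 h2)
  have homega_pos : ∀ m : ℕ, 2 ≤ m → 0 < brjunoOmega l m := by
    intro m hm
    obtain ⟨k, hk2, hkm, heq⟩ := omega_attained l m hm
    rw [heq]
    exact norm_pos_iff.mpr (sub_ne_zero.mpr (hlk k hk2))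
  -- frequently large from hC
  have hfreq : ∀ B : ℝ, ∀ N : ℕ, ∃ m : ℕ, N ≤ m ∧
      B < (1 / m : ℝ) * Real.log (1 / brjunoOmega l m) := by
    intro B N
    have h1 : ((B:EReal)) < Filter.limsup
        (fun m : ℕ => (((1 / m : ℝ) * Real.log (1 / brjunoOmega l m) : ℝ) : EReal))
        Filter.atTop := by rw [hC]; exact EReal.coe_lt_top B
    have h2 := Filter.frequently_lt_of_lt_limsup (by isBoundedDefault) h1
    obtain ⟨m, hm, hm'⟩ := Filter.frequently_atTop.mp h2 N
    exact ⟨m, hm, EReal.coe_lt_coe_iff.mp hm'⟩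
  -- lower bound on phi
  have hphi_lb : ∀ n : ℕ, 2 ≤ n →
      (1/2 : ℝ) * (‖l ^ n - 1‖)⁻¹ ≤ ‖phiS l n‖ := by
    intro n hn
    rw [phiS_rec l n hn, norm_mul, norm_inv]
    have h1 := aS_key l n hn
    have h2 : (0:ℝ) ≤ (‖l ^ n - 1‖)⁻¹ := inv_nonneg.mpr (norm_nonneg _)
    nlinarith
  -- key claim
  have hclaim : ∀ M : ℝ, ∀ N : ℕ, ∃ n : ℕ, N ≤ n ∧
      M ≤ (1 / n : ℝ) * Real.log (‖phiS l n‖) := by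
    intro M N
    set M' : ℝ := max M 0 with hM'
    set N' : ℕ := max N 2 with hN'
    obtain ⟨δ, hδpos, hδle⟩ : ∃ δ : ℝ, 0 < δ ∧ ∀ k, 2 ≤ k → k ≤ N' + 1 →
        δ ≤ ‖l ^ k - l‖ := by
      have hne : (Finset.Icc 2 (N'+1)).Nonempty := ⟨2, Finset.mem_Icc.mpr ⟨le_refl 2, by omega⟩⟩
      refine ⟨(Finset.Icc 2 (N'+1)).inf' hne (fun k => ‖l ^ k - l‖), ?_, ?_⟩
      · rw [Finset.lt_inf'_iff]
        intro k hk
        exact norm_pos_iff.mpr (sub_ne_zero.mpr (hlk k (Finset.mem_Icc.mp hk).1))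
      · intro k h2 hle
        exact Finset.inf'_le _ (Finset.mem_Icc.mpr ⟨h2, hle⟩)
    set B : ℝ := max (M' + Real.log 2 + 1) (Real.log (1/δ) + 1) with hB
    obtain ⟨m, hm2, hmB⟩ := hfreq B 2
    have hm1 : (1:ℝ) ≤ (m:ℝ) := by exact_mod_cast le_trans (by norm_num : (1:ℕ) ≤ 2) hm2
    have hmpos : (0:ℝ) < m := by linarith
    have hω := homega_pos m hm2
    have hL : (m:ℝ) * B < Real.log (1 / brjunoOmega l m) := by
      have h3 := (mul_lt_mul_iff_right₀ hmpos).mpr hmB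
      rw [← mul_assoc, mul_one_div, div_self hmpos.ne', one_mul] at h3
      exact h3
    have hlog2pos : (0:ℝ) < Real.log 2 := Real.log_pos (by norm_num)
    have hM'nn : (0:ℝ) ≤ M' := le_max_right M 0
    have hBpos : (0:ℝ) < B :=
      lt_of_lt_of_le (by linarith : (0:ℝ) < M' + Real.log 2 + 1) (le_max_left _ _)
    have hωδ : brjunoOmega l m < δ := by
      have h1 : Real.log (1/δ) < Real.log (1 / brjunoOmega l m) := by
        have h4 : Real.log (1/δ) + 1 ≤ B := le_max_right _ _
        have h5 : B ≤ (m:ℝ) * B := le_mul_of_one_le_left hBpos.le hm1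
        linarith
      have h2 : (1:ℝ)/δ < 1 / brjunoOmega l m :=
        (Real.log_lt_log_iff (by positivity) (by positivity)).mp h1
      exact lt_of_one_div_lt_one_div hδpos h2
    obtain ⟨k0, hk02, hk0m, hk0eq⟩ := omega_attained l m hm2
    have hk0N : N' + 1 < k0 := by
      by_contra hcon
      push_neg at hcon
      have h6 := hδle k0 hk02 hcon
      rw [← hk0eq] at h6
      linarith
    set n : ℕ := k0 - 1 with hn
    have hn2 : 2 ≤ n := by omega
    have hnm : n ≤ m := by omega
    have hnN : N ≤ n := by omega
    have hnpos : (0:ℝ) < n := by exact_mod_cast Nat.lt_of_lt_of_le (by norm_num) hn2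
    have habs_eq : ‖l ^ n - 1‖ = brjunoOmega l m := by
      rw [hk0eq]
      have h7 : l ^ k0 - l = l * (l ^ n - 1) := by
        rw [mul_sub, mul_one, ← pow_succ', show n + 1 = k0 by omega]
      rw [h7, norm_mul, habs, one_mul]
    have hlb : (1/2 : ℝ) * (brjunoOmega l m)⁻¹ ≤ ‖phiS l n‖ := by
      have h8 := hphi_lb n hn2; rwa [habs_eq] at h8
    have hpos2 : (0:ℝ) < (1/2 : ℝ) * (brjunoOmega l m)⁻¹ := by positivity
    have hlog1 : Real.log ((1/2 : ℝ) * (brjunoOmega l m)⁻¹)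
        ≤ Real.log (‖phiS l n‖) := Real.log_le_log hpos2 hlb
    have hlog2 : Real.log ((1/2 : ℝ) * (brjunoOmega l m)⁻¹)
        = Real.log (1 / brjunoOmega l m) - Real.log 2 := by
      rw [show (1/2 : ℝ) = 2⁻¹ from by norm_num, one_div,
        Real.log_mul (by norm_num) (by positivity), Real.log_inv, Real.log_inv]
      ring
    have hmm' : (n:ℝ) * M' + Real.log 2 ≤ (m:ℝ) * B := by
      have h1 : M' + Real.log 2 + 1 ≤ B := le_max_left _ _
      have h2 : (n:ℝ) ≤ m := by exact_mod_cast hnm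
      have hlog2' : Real.log 2 ≤ 1 := by
        have := Real.log_le_sub_one_of_pos (by norm_num : (0:ℝ) < 2)
        linarith
      have hm1' : (1:ℝ) ≤ (m:ℝ) := by exact_mod_cast le_trans (by norm_num : (1:ℕ) ≤ 2) hm2
      nlinarith [mul_le_mul_of_nonneg_left h1 (le_of_lt hmpos),
        mul_nonneg (sub_nonneg.mpr h2) hM'nn,
        mul_nonneg (sub_nonneg.mpr hm1') hlog2pos.le]
    refine ⟨n, hnN, ?_⟩
    have hfinal : (n:ℝ) * M' ≤ Real.log (‖phiS l n‖) := by linarith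
    calc M ≤ M' := le_max_left M 0
      _ = (1/(n:ℝ)) * ((n:ℝ) * M') := by field_simp
      _ ≤ (1/(n:ℝ)) * Real.log (‖phiS l n‖) :=
          mul_le_mul_of_nonneg_left hfinal (by positivity)
  -- the limsup statement
  have hlim : Filter.limsup
      (fun n : ℕ => (((1 / n : ℝ) * Real.log (‖phiS l n‖) : ℝ) : EReal))
      Filter.atTop = ⊤ := by
    rw [EReal.eq_top_iff_forall_lt]
    intro y
    have hfr : ∃ᶠ n : ℕ in Filter.atTop, ((y + 1 : ℝ) : EReal)
        ≤ (((1 / n : ℝ) * Real.log (‖phiS l n‖) : ℝ) : EReal) := by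
      rw [Filter.frequently_atTop]
      intro N
      obtain ⟨n, hnN, hle⟩ := hclaim (y + 1) N
      exact ⟨n, hnN, EReal.coe_le_coe_iff.mpr hle⟩
    have h9 := Filter.le_limsup_of_frequently_le hfr (by isBoundedDefault)
    exact lt_of_lt_of_le (EReal.coe_lt_coe_iff.mpr (lt_add_one y)) h9
  -- non-summability
  have hnosum : ∀ z : ℂ, z ≠ 0 → ¬ Summable (fun n : ℕ => phiS l n * z ^ n) := by
    intro z hz hsum
    have h0 : Filter.Tendsto (fun n : ℕ => phiS l n * z ^ n) Filter.atTop (nhds 0) :=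
      hsum.tendsto_atTop_zero
    have hb : ∀ᶠ n in Filter.atTop, ‖phiS l n * z ^ n‖ ≤ 1 := by
      have h10 := h0.eventually (Metric.ball_mem_nhds (0:ℂ) one_pos)
      refine h10.mono (fun n hn => ?_)
      rw [dist_zero_right] at hn
      exact le_of_lt hn
    set K : ℝ := max (Real.log (1 / ‖z‖)) 0 with hKdef
    have hzpos : 0 < ‖z‖ := norm_pos_iff.mpr hz
    have hKle : ∀ᶠ n : ℕ in Filter.atTop,
        (((1 / n : ℝ) * Real.log (‖phiS l n‖) : ℝ) : EReal) ≤ ((K : ℝ) : EReal) := by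
      filter_upwards [hb, Filter.eventually_ge_atTop 1] with n hn hn1
      rw [EReal.coe_le_coe_iff]
      have hnpos : (0:ℝ) < n := by exact_mod_cast Nat.lt_of_lt_of_le (by norm_num) hn1
      have hKnn : (0:ℝ) ≤ K := le_max_right _ _
      rcases eq_or_lt_of_le (norm_nonneg (phiS l n)) with he | hp
      · rw [← he, Real.log_zero, mul_zero]; exact hKnn
      · have habsle : ‖phiS l n‖ ≤ (‖z‖ ^ n)⁻¹ := by
          rw [norm_mul, norm_pow] at hn
          rw [inv_eq_one_div, le_div_iff₀ (pow_pos hzpos n)]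
          exact hn
        have hlogle : Real.log (‖phiS l n‖) ≤ (n:ℝ) * Real.log (1 / ‖z‖) := by
          have h11 := Real.log_le_log hp habsle
          rw [Real.log_inv, Real.log_pow] at h11
          rw [one_div, Real.log_inv]
          push_cast
          linarith
        have hKb : Real.log (1 / ‖z‖) ≤ K := le_max_left _ _
        have h12 : (1/(n:ℝ)) * Real.log (‖phiS l n‖) ≤ (1/(n:ℝ)) * ((n:ℝ) * K) := by
          apply mul_le_mul_of_nonneg_left _ (by positivity)
          nlinarith
        calc (1/(n:ℝ)) * Real.log (‖phiS l n‖) ≤ (1/(n:ℝ)) * ((n:ℝ) * K) := h12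
          _ = K := by field_simp
    have hle := Filter.limsup_le_of_le (by isBoundedDefault) hKle
    rw [hlim] at hle
    exact absurd hle (EReal.coe_lt_top K).not_ge
  refine ⟨aS l, ?_, ?_, phiS l, by simp [phiS], ?_, phiS_rec l, aS_key l, hlim, hnosum⟩
  · rw [aS]; simp
  · intro n hn
    rw [aS, if_neg (by omega)]
    split_ifs
    · exact Or.inl rfl
    · exact Or.inr rfl
  · rw [show aS l 1 = 1 from by rw [aS]; simp]
    simp [phiS]
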